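/- Let Y = {Y(t) : t ≥ 0} be a nondecreasing stochastic process with stationary increments such that (i) E[Y(b) - Y(a)] < ∞ for all a < b, (ii) P(Y(t) = Y(0)) ∈ (0,1) for all sufficiently small t > 0, and (iii) liminf_{t ↓ 0} E[Y(t) - Y(0) | Y(t) > Y(0)] > 0. Then almost surely the paths of Y are step functions with finitely many jumps in each bounded interval; for each fixed t ≥ 0 there is a jump at t with probability 0; and for a < b the expected number of jump points in [a,b] equals E[Y(b) - Y(a)] / lim_{n → ∞} E[Y(2^{-n}) - Y(0) | Y(2^{-n}) > Y(0)]. -/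

import Mathlib

open MeasureTheory Filter
open scoped ENNReal Topology

/-- `t` is a point of increase (jump point) of the nondecreasing path `g` on `[0,∞)`:
`g(t+ε) > g((t-ε) ∨ 0)` for all `ε > 0`. -/
def PtInc (g : ℝ → ℝ) (t : ℝ) : Prop :=
  ∀ ε : ℝ, 0 < ε → g (max (t - ε) 0) < g (t + ε)

noncomputable def gK (a b : ℝ) (n : ℕ) : ℕ := ⌊(b - a) * 2 ^ n⌋₊

noncomputable def gpt (a b : ℝ) (n k : ℕ) : ℝ := min (a + k * ((2 : ℝ) ^ n)⁻¹) b

noncomputable def gS (g : ℝ → ℝ) (a b : ℝ) (n : ℕ) : Finset ℕ :=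
  (Finset.range (gK a b n + 1)).filter
    (fun k => g (gpt a b n k) < g (gpt a b n (k + 1)))

section det
variable {a b : ℝ} (hab : a ≤ b)

lemma gpt_le_b (n k : ℕ) : gpt a b n k ≤ b := min_le_right _ _

lemma a_le_gpt (hab : a ≤ b) (n k : ℕ) : a ≤ gpt a b n k :=
  le_min (le_add_of_nonneg_right (by positivity)) hab

lemma gpt_mono (n : ℕ) : Monotone (gpt a b n) := by
  intro k k' hk
  apply min_le_min _ le_rfl
  have : (k:ℝ) ≤ k' := by exact_mod_cast hk
  nlinarith [inv_nonneg.mpr (le_of_lt (by positivity : (0:ℝ) < (2:ℝ)^n))]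

lemma gpt_zero (hab : a ≤ b) (n : ℕ) : gpt a b n 0 = a := by
  simp [gpt, hab]

lemma gpt_eq_of_le {n k : ℕ} (hk : k ≤ gK a b n) (hab : 0 ≤ b - a) :
    gpt a b n k = a + k * ((2 : ℝ) ^ n)⁻¹ := by
  apply min_eq_left
  have h1 : (k : ℝ) ≤ (b - a) * 2 ^ n := by
    calc (k : ℝ) ≤ (gK a b n : ℝ) := by exact_mod_cast hk
    _ ≤ (b - a) * 2 ^ n := Nat.floor_le (by positivity)
  have hp : (0:ℝ) < 2^n := by positivity
  have h2 : (k : ℝ) * ((2:ℝ)^n)⁻¹ ≤ b - a := by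
    rw [mul_inv_le_iff₀ hp]; linarith [mul_comm (b-a) ((2:ℝ)^n)] 
  linarith

lemma gpt_last (n : ℕ) : gpt a b n (gK a b n + 1) = b := by
  apply min_eq_right
  have h1 : (b - a) * 2 ^ n < (gK a b n : ℝ) + 1 := Nat.lt_floor_add_one _
  have hp : (0:ℝ) < 2^n := by positivity
  have h2 : b - a ≤ ((gK a b n : ℝ) + 1) * ((2:ℝ)^n)⁻¹ := by
    calc b - a = (b-a) * 2^n * ((2:ℝ)^n)⁻¹ := by field_simp
    _ ≤ ((gK a b n : ℝ) + 1) * ((2:ℝ)^n)⁻¹ := by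
        apply mul_le_mul_of_nonneg_right (le_of_lt h1) (by positivity)
  push_cast
  linarith

lemma gpt_diff_le {n k : ℕ} (hk : k ≤ gK a b n) (hab : 0 ≤ b - a) :
    gpt a b n (k+1) - gpt a b n k ≤ ((2:ℝ)^n)⁻¹ := by
  rw [gpt_eq_of_le hk hab]
  have := min_le_left (a + (k+1 : ℕ) * ((2 : ℝ) ^ n)⁻¹) b
  calc gpt a b n (k+1) - (a + k * ((2:ℝ)^n)⁻¹)
      ≤ (a + ((k:ℝ)+1) * ((2:ℝ)^n)⁻¹) - (a + k * ((2:ℝ)^n)⁻¹) := by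
        have h3 := gpt_le_b (a:=a) (b:=b) n (k+1)
        have h4 : gpt a b n (k+1) ≤ a + ((k:ℝ)+1) * ((2:ℝ)^n)⁻¹ := by
          unfold gpt; push_cast; exact min_le_left _ _
        linarith
  _ = ((2:ℝ)^n)⁻¹ := by ring

lemma gpt_refine (n k : ℕ) : gpt a b n k = gpt a b (n+1) (2*k) := by
  unfold gpt
  congr 1
  push_cast
  field_simp
  ring

lemma gK_refine (n : ℕ) (h : 0 ≤ b - a) : 2 * gK a b n ≤ gK a b (n+1) := by
  apply Nat.le_floor
  push_cast
  have := Nat.floor_le (by positivity : 0 ≤ (b - a) * 2 ^ n)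
  calc 2 * (gK a b n : ℝ) ≤ 2 * ((b-a) * 2^n) := by unfold gK; linarith
  _ = (b-a) * 2^(n+1) := by ring

end det

section mono
variable {g : ℝ → ℝ} {a b : ℝ}

lemma gpt_nonneg (ha : 0 ≤ a) (hab : a ≤ b) (n k : ℕ) : 0 ≤ gpt a b n k :=
  le_trans ha (a_le_gpt hab n k)

lemma gS_card_mono (hg : ∀ s t : ℝ, 0 ≤ s → s ≤ t → g s ≤ g t)
    (ha : 0 ≤ a) (hab : a ≤ b) (n : ℕ) :
    (gS g a b n).card ≤ (gS g a b (n+1)).card := by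
  set j : ℕ → ℕ := fun k =>
    if g (gpt a b (n+1) (2*k)) < g (gpt a b (n+1) (2*k+1)) then 2*k else 2*k+1 with hj
  have gmono : ∀ i i' : ℕ, i ≤ i' → g (gpt a b (n+1) i) ≤ g (gpt a b (n+1) i') :=
    fun i i' h => hg _ _ (gpt_nonneg ha hab _ _) (gpt_mono _ h)
  apply Finset.card_le_card_of_injOn j
  · intro k hk
    simp only [gS, Finset.mem_coe, Finset.mem_filter, Finset.mem_range] at hk ⊢
    obtain ⟨hkr, hkpos⟩ := hk
    have hk' : k ≤ gK a b n := Nat.lt_succ_iff.mp hkr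
    have h2k : 2*k ≤ gK a b (n+1) :=
      le_trans (by omega : 2*k ≤ 2 * gK a b n) (gK_refine n (by linarith))
    have e1 : gpt a b n k = gpt a b (n+1) (2*k) := gpt_refine n k
    have e2 : gpt a b n (k+1) = gpt a b (n+1) (2*k+2) := by
      have := gpt_refine (a:=a) (b:=b) n (k+1)
      simpa [Nat.mul_succ, show 2*(k+1) = 2*k+2 by omega] using this
    rw [e1, e2] at hkpos
    by_cases hcase : g (gpt a b (n+1) (2*k)) < g (gpt a b (n+1) (2*k+1))
    · refine ⟨?_, ?_⟩
      · rw [hj]; simp only; rw [if_pos hcase]; omega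
      · rw [hj]; simp only; rw [if_pos hcase]
        exact hcase
    · have heq : g (gpt a b (n+1) (2*k+1)) ≤ g (gpt a b (n+1) (2*k)) := le_of_not_gt hcase
      have hpos2 : g (gpt a b (n+1) (2*k+1)) < g (gpt a b (n+1) (2*k+2)) :=
        lt_of_le_of_lt heq hkpos
      have hmem : 2*k+1 ≤ gK a b (n+1) := by
        by_contra hcon
        have hK' : gK a b (n+1) = 2*k := by omega
        have hb : gpt a b (n+1) (2*k+1) = b := by
          have := gpt_last (a:=a) (b:=b) (n+1)
          rw [hK'] at this; exact this
        have : g (gpt a b (n+1) (2*k+2)) ≤ g b :=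
          hg _ _ (gpt_nonneg ha hab _ _) (gpt_le_b _ _)
        have h6 : g (gpt a b (n+1) (2*k+2)) ≤ g (gpt a b (n+1) (2*k+1)) := by
          rw [hb]; exact this
        exact absurd (lt_of_lt_of_le hpos2 h6) (lt_irrefl _)
      refine ⟨?_, ?_⟩
      · rw [hj]; simp only; rw [if_neg hcase]; omega
      · rw [hj]; simp only; rw [if_neg hcase]
        simpa [show 2*k+1+1 = 2*k+2 by omega] using hpos2
  · intro k₁ _ k₂ _ hjk
    have hdiv : ∀ k, j k / 2 = k := by
      intro k; rw [hj]; dsimp only; split <;> omega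
    rw [← hdiv k₁, ← hdiv k₂, hjk]

end mono

section bisect
variable {g : ℝ → ℝ}

lemma exists_ptInc (hg : ∀ s t : ℝ, 0 ≤ s → s ≤ t → g s ≤ g t)
    {l r : ℝ} (hl : 0 ≤ l) (hlr : l ≤ r) (h : g l < g r) :
    ∃ t, t ∈ Set.Icc l r ∧ PtInc g t := by
  set T : Set ℝ := {x | x ∈ Set.Icc l r ∧ g l < g x} with hT
  have hrT : r ∈ T := ⟨⟨hlr, le_rfl⟩, h⟩
  have hne : T.Nonempty := ⟨r, hrT⟩
  have hbdd : BddBelow T := ⟨l, fun x hx => hx.1.1⟩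
  set t := sInf T with ht
  have htl : l ≤ t := le_csInf hne fun x hx => hx.1.1
  have htr : t ≤ r := csInf_le hbdd hrT
  refine ⟨t, ⟨htl, htr⟩, ?_⟩
  intro ε hε
  obtain ⟨x, hxT, hxlt⟩ : ∃ x ∈ T, x < t + ε :=
    exists_lt_of_csInf_lt hne (by linarith)
  have h1 : g x ≤ g (t + ε) := hg _ _ (le_trans hl hxT.1.1) (le_of_lt hxlt)
  have h2 : g (max (t - ε) 0) ≤ g l := by
    by_cases hc : t - ε ≤ l
    · exact hg _ _ (le_max_right _ _) (max_le hc hl)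
    · push_neg at hc
      have hmax : max (t - ε) 0 = t - ε := max_eq_left (by linarith)
      rw [hmax]
      have hnotT : t - ε ∉ T := fun hmem => absurd (csInf_le hbdd hmem) (by linarith)
      have : ¬ (g l < g (t - ε)) := fun hlt => hnotT ⟨⟨by linarith, by linarith⟩, hlt⟩
      linarith [le_of_not_gt this]
  calc g (max (t - ε) 0) ≤ g l := h2
  _ < g x := hxT.2
  _ ≤ g (t + ε) := h1

end bisect

section phimem
variable {g : ℝ → ℝ} {a b : ℝ}

lemma phi_mem (hg : ∀ s t : ℝ, 0 ≤ s → s ≤ t → g s ≤ g t)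
    (ha : 0 ≤ a) (hab : a < b) {t : ℝ} (ht : t ∈ Set.Icc a b) (htp : PtInc g t)
    (hng : ∀ n k : ℕ, t ≠ gpt a b n k) (n : ℕ) :
    ⌊(t - a) * 2 ^ n⌋₊ ∈ gS g a b n ∧ gpt a b n ⌊(t - a) * 2 ^ n⌋₊ < t ∧
      t < gpt a b n (⌊(t - a) * 2 ^ n⌋₊ + 1) := by
  set k := ⌊(t - a) * 2 ^ n⌋₊ with hk
  have hta : a < t := lt_of_le_of_ne ht.1 (by
    have := hng n 0; rw [gpt_zero (le_of_lt hab) n] at this; exact fun h => this h.symm)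
  have htb : t < b := lt_of_le_of_ne ht.2 (by
    have := hng n (gK a b n + 1); rw [gpt_last n] at this; exact this)
  have hkK : k ≤ gK a b n :=
    Nat.floor_le_floor (mul_le_mul_of_nonneg_right (by linarith) (by positivity))
  have hpn : (0:ℝ) < 2 ^ n := by positivity
  have heq : gpt a b n k = a + k * ((2:ℝ)^n)⁻¹ := gpt_eq_of_le hkK (by linarith)
  have hlow : gpt a b n k < t := by
    have h1 : (k : ℝ) ≤ (t - a) * 2 ^ n := Nat.floor_le (by nlinarith)
    have h2 : (k : ℝ) * ((2:ℝ)^n)⁻¹ ≤ t - a := by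
      rw [mul_inv_le_iff₀ hpn]; linarith [mul_comm (t - a) ((2:ℝ)^n)]
    have h3 : gpt a b n k ≤ t := by rw [heq]; linarith
    exact lt_of_le_of_ne h3 (fun h => hng n k h.symm)
  have hhigh : t < gpt a b n (k + 1) := by
    have h1 : (t - a) * 2 ^ n < (k : ℝ) + 1 := Nat.lt_floor_add_one _
    have h2 : t - a < ((k:ℝ) + 1) * ((2:ℝ)^n)⁻¹ := by
      calc t - a = (t - a) * 2^n * ((2:ℝ)^n)⁻¹ := by field_simp
      _ < ((k:ℝ) + 1) * ((2:ℝ)^n)⁻¹ := by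
          apply mul_lt_mul_of_pos_right h1 (by positivity)
    refine lt_min (by push_cast; linarith) htb
  refine ⟨?_, hlow, hhigh⟩
  have hεpos : 0 < min (t - gpt a b n k) (gpt a b n (k+1) - t) := by
    apply lt_min <;> linarith
  set ε := min (t - gpt a b n k) (gpt a b n (k+1) - t) with hε
  have hinc := htp ε hεpos
  have hb1 : g (gpt a b n k) ≤ g (max (t - ε) 0) := by
    apply hg _ _ (gpt_nonneg ha (le_of_lt hab) n k)
    exact le_trans (by have := min_le_left (t - gpt a b n k) (gpt a b n (k+1) - t); linarith)
      (le_max_left _ _)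
  have hb2 : g (t + ε) ≤ g (gpt a b n (k+1)) := by
    apply hg _ _ (by linarith)
    have := min_le_right (t - gpt a b n k) (gpt a b n (k+1) - t); linarith
  simp only [gS, Finset.mem_filter, Finset.mem_range]
  exact ⟨Nat.lt_succ_of_le hkK, lt_of_le_of_lt hb1 (lt_of_lt_of_le hinc hb2)⟩

end phimem

section detcount
variable {g : ℝ → ℝ} {a b : ℝ}

lemma det_count (hg : ∀ s t : ℝ, 0 ≤ s → s ≤ t → g s ≤ g t)
    (ha : 0 ≤ a) (hab : a < b)
    (hG : ∀ n k : ℕ, ¬ PtInc g (gpt a b n k))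
    {B : ℕ} (hB : ∀ n, (gS g a b n).card ≤ B) :
    {t | t ∈ Set.Icc a b ∧ PtInc g t}.Finite ∧
      (⨆ n, ((gS g a b n).card : ℝ≥0∞)) =
        ({t | t ∈ Set.Icc a b ∧ PtInc g t}.ncard : ℝ≥0∞) := by
  classical
  set J := {t | t ∈ Set.Icc a b ∧ PtInc g t} with hJ
  have hng : ∀ t ∈ J, ∀ n k : ℕ, t ≠ gpt a b n k := by
    intro t ht n k h
    exact hG n k (h ▸ ht.2)
  -- sub1
  have sub1 : ∀ T : Finset ℝ, ↑T ⊆ J → ∃ n, T.card ≤ (gS g a b n).card := by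
    intro T hT
    set D := (T ×ˢ T).filter (fun p => p.1 ≠ p.2) with hD
    by_cases hDne : D.Nonempty
    · have hδpos : 0 < D.inf' hDne (fun p => |p.1 - p.2|) := by
        rw [Finset.lt_inf'_iff]
        intro p hp
        rw [hD, Finset.mem_filter] at hp
        exact abs_pos.mpr (sub_ne_zero.mpr hp.2)
      set δ := D.inf' hDne (fun p => |p.1 - p.2|) with hδ
      obtain ⟨n, hn⟩ : ∃ n : ℕ, ((2:ℝ)^n)⁻¹ < δ := by
        obtain ⟨n, hn⟩ := exists_pow_lt_of_lt_one hδpos (by norm_num : (1:ℝ)/2 < 1)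
        exact ⟨n, by rw [show ((2:ℝ)^n)⁻¹ = ((1:ℝ)/2)^n by rw [div_pow]; simp]; exact hn⟩
      refine ⟨n, Finset.card_le_card_of_injOn (fun t => ⌊(t - a) * 2 ^ n⌋₊) ?_ ?_⟩
      · intro t ht
        have htJ := hT ht
        exact (phi_mem hg ha hab htJ.1 htJ.2 (hng t htJ) n).1
      · intro t ht t' ht' hkeq
        by_contra hne
        have h1 := phi_mem hg ha hab (hT ht).1 (hT ht).2 (hng t (hT ht)) n
        have h2 := phi_mem hg ha hab (hT ht').1 (hT ht').2 (hng t' (hT ht')) n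
        have hkK : ⌊(t - a) * 2 ^ n⌋₊ ≤ gK a b n := by
          have := h1.1
          simp only [gS, Finset.mem_filter, Finset.mem_range] at this
          omega
        have hd := gpt_diff_le hkK (by linarith)
        have hmemD : (t, t') ∈ D := by
          rw [hD, Finset.mem_filter, Finset.mem_product]
          exact ⟨⟨ht, ht'⟩, hne⟩
        have hinf := Finset.inf'_le (fun p => |p.1 - p.2|) hmemD
        have hkeq' : ⌊(t - a) * 2 ^ n⌋₊ = ⌊(t' - a) * 2 ^ n⌋₊ := hkeq
        rw [hkeq'] at h1 hd
        obtain ⟨-, hl1, hh1⟩ := h1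
        obtain ⟨-, hl2, hh2⟩ := h2
        have habs : |t - t'| < ((2:ℝ)^n)⁻¹ := by
          rw [abs_sub_lt_iff]
          constructor <;> linarith
        simp only at hinf
        linarith
    · have hcard : T.card ≤ 1 := by
        rw [Finset.card_le_one]
        intro x hx y hy
        by_contra hne
        exact hDne ⟨(x, y), by rw [hD, Finset.mem_filter, Finset.mem_product]; exact ⟨⟨hx, hy⟩, hne⟩⟩
      rcases T.eq_empty_or_nonempty with hE | ⟨t, htT⟩
      · exact ⟨0, by simp [hE]⟩
      · refine ⟨0, le_trans hcard ?_⟩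
        have htJ := hT htT
        have := (phi_mem hg ha hab htJ.1 htJ.2 (hng t htJ) 0).1
        exact Finset.card_pos.mpr ⟨_, this⟩
  -- finiteness
  have hfinJ : J.Finite := by
    by_contra hinf
    obtain ⟨T, hTsub, hTcard⟩ := Set.Infinite.exists_subset_card_eq hinf (B + 1)
    obtain ⟨n, hn⟩ := sub1 T hTsub
    have := hB n
    omega
  -- sub2 : card gS n ≤ ncard J
  have sub2 : ∀ n, (gS g a b n).card ≤ J.ncard := by
    intro n
    set ψ : ℕ → ℝ := fun k =>
      if h : k ∈ gS g a b n then
        (exists_ptInc hg (gpt_nonneg ha (le_of_lt hab) n k)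
          (gpt_mono n (Nat.le_succ k))
          (by simp only [gS, Finset.mem_filter] at h; exact h.2)).choose
      else 0 with hψ
    have hspec : ∀ k (h : k ∈ gS g a b n),
        ψ k ∈ Set.Icc (gpt a b n k) (gpt a b n (k+1)) ∧ PtInc g (ψ k) := by
      intro k h
      rw [hψ]; simp only [dif_pos h]
      exact (exists_ptInc hg (gpt_nonneg ha (le_of_lt hab) n k)
          (gpt_mono n (Nat.le_succ k))
          (by simp only [gS, Finset.mem_filter] at h; exact h.2)).choose_spec
    have hψJ : ∀ k, k ∈ gS g a b n → ψ k ∈ J := by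
      intro k hk
      obtain ⟨hmem, hpt⟩ := hspec k hk
      exact ⟨⟨le_trans (a_le_gpt (le_of_lt hab) n k) hmem.1,
        le_trans hmem.2 (gpt_le_b n (k+1))⟩, hpt⟩
    have hψlt : ∀ k k', k ∈ gS g a b n → k' ∈ gS g a b n → k < k' → ψ k < ψ k' := by
      intro k k' hk hk' hlt
      obtain ⟨hm1, hp1⟩ := hspec k hk
      obtain ⟨hm2, hp2⟩ := hspec k' hk'
      have h1 : ψ k < gpt a b n (k+1) :=
        lt_of_le_of_ne hm1.2 (hng _ (hψJ k hk) n (k+1))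
      have h2 : gpt a b n k' < ψ k' :=
        lt_of_le_of_ne hm2.1 (fun h => (hng _ (hψJ k' hk') n k') h.symm)
      have h3 : gpt a b n (k+1) ≤ gpt a b n k' := gpt_mono n hlt
      linarith
    have hinj : Set.InjOn ψ ↑(gS g a b n) := by
      intro k hk k' hk' heq
      rcases lt_trichotomy k k' with h | h | h
      · exact absurd heq (ne_of_lt (hψlt k k' hk hk' h))
      · exact h
      · exact absurd heq.symm (ne_of_lt (hψlt k' k hk' hk h))
    have hcard : (gS g a b n).card ≤ hfinJ.toFinset.card :=
      Finset.card_le_card_of_injOn ψ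
        (fun k hk => hfinJ.mem_toFinset.mpr (hψJ k hk)) hinj
    have hnc : J.ncard = hfinJ.toFinset.card := by
      rw [← Set.ncard_coe_finset, Set.Finite.coe_toFinset]
    omega
  refine ⟨hfinJ, le_antisymm ?_ ?_⟩
  · exact iSup_le fun n => Nat.cast_le.mpr (sub2 n)
  · obtain ⟨n₀, hn₀⟩ := sub1 hfinJ.toFinset (by rw [Set.Finite.coe_toFinset])
    have hnc : J.ncard = hfinJ.toFinset.card := by
      rw [← Set.ncard_coe_finset, Set.Finite.coe_toFinset]
    calc (J.ncard : ℝ≥0∞) ≤ ((gS g a b n₀).card : ℝ≥0∞) := by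
          rw [hnc]; exact_mod_cast Nat.cast_le.mpr hn₀
    _ ≤ ⨆ n, ((gS g a b n).card : ℝ≥0∞) := le_iSup (fun n => ((gS g a b n).card : ℝ≥0∞)) n₀

end detcount

section stat
variable {Ω : Type*} [MeasurableSpace Ω] (P : Measure Ω)
variable {Y : ℝ → Ω → ℝ}

lemma meas_shift (hmeas : ∀ t, Measurable (Y t)) (h : ℝ) :
    Measurable (fun ω => fun t : {t : ℝ // 0 ≤ t} => Y ((t : ℝ) + h) ω - Y h ω) :=
  measurable_pi_iff.mpr fun t => ((hmeas _).sub (hmeas _))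

lemma stat_set (hmeas : ∀ t, Measurable (Y t))
    (hstat : ∀ h : ℝ, 0 ≤ h →
      Measure.map (fun ω => fun t : {t : ℝ // 0 ≤ t} => Y ((t : ℝ) + h) ω - Y h ω) P
        = Measure.map (fun ω => fun t : {t : ℝ // 0 ≤ t} => Y (t : ℝ) ω - Y 0 ω) P)
    {h s : ℝ} (hh : 0 ≤ h) (hs : 0 ≤ s) :
    P {ω | Y h ω < Y (s + h) ω} = P {ω | Y 0 ω < Y s ω} := by
  have key := hstat h hh
  set A : Set ({t : ℝ // 0 ≤ t} → ℝ) := {f | 0 < f ⟨s, hs⟩} with hA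
  have hAm : MeasurableSet A := measurableSet_lt measurable_const (measurable_pi_apply _)
  have h1 := Measure.map_apply (μ := P) (meas_shift hmeas h) hAm
  have h2 := Measure.map_apply (μ := P) (meas_shift hmeas 0) hAm
  rw [key] at h1
  have e0 : (fun ω => fun t : {t : ℝ // 0 ≤ t} => Y ((t : ℝ) + 0) ω - Y 0 ω)
      = (fun ω => fun t : {t : ℝ // 0 ≤ t} => Y (t : ℝ) ω - Y 0 ω) := by
    funext ω t; rw [add_zero]
  rw [e0] at h2
  rw [h2] at h1
  have e1 : (fun ω => fun t : {t : ℝ // 0 ≤ t} => Y ((t : ℝ) + h) ω - Y h ω) ⁻¹' A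
      = {ω | Y h ω < Y (s + h) ω} := by
    ext ω; simp [hA, sub_pos]
  have e2 : (fun ω => fun t : {t : ℝ // 0 ≤ t} => Y (t : ℝ) ω - Y 0 ω) ⁻¹' A
      = {ω | Y 0 ω < Y s ω} := by
    ext ω; simp [hA, sub_pos]
  rw [e1, e2] at h1
  exact h1.symm

lemma stat_lint (hmeas : ∀ t, Measurable (Y t))
    (hstat : ∀ h : ℝ, 0 ≤ h →
      Measure.map (fun ω => fun t : {t : ℝ // 0 ≤ t} => Y ((t : ℝ) + h) ω - Y h ω) P
        = Measure.map (fun ω => fun t : {t : ℝ // 0 ≤ t} => Y (t : ℝ) ω - Y 0 ω) P)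
    {h s : ℝ} (hh : 0 ≤ h) (hs : 0 ≤ s) :
    ∫⁻ ω, ENNReal.ofReal (Y (s + h) ω - Y h ω) ∂P
      = ∫⁻ ω, ENNReal.ofReal (Y s ω - Y 0 ω) ∂P := by
  have key := hstat h hh
  set G : ({t : ℝ // 0 ≤ t} → ℝ) → ℝ≥0∞ := fun f => ENNReal.ofReal (f ⟨s, hs⟩) with hG
  have hGm : Measurable G := ENNReal.measurable_ofReal.comp (measurable_pi_apply _)
  have h1 := MeasureTheory.lintegral_map (μ := P) hGm (meas_shift hmeas h)
  have h2 := MeasureTheory.lintegral_map (μ := P) hGm (meas_shift hmeas 0)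
  rw [key] at h1
  have e0 : (fun ω => fun t : {t : ℝ // 0 ≤ t} => Y ((t : ℝ) + 0) ω - Y 0 ω)
      = (fun ω => fun t : {t : ℝ // 0 ≤ t} => Y (t : ℝ) ω - Y 0 ω) := by
    funext ω t; rw [add_zero]
  rw [e0] at h2
  rw [h2] at h1
  simpa [hG] using h1.symm

end stat

section countkey
variable {Ω : Type*} [MeasurableSpace Ω]

lemma count_key (P : Measure Ω) [IsProbabilityMeasure P]
    (Y : ℝ → Ω → ℝ) (hmeas : ∀ t, Measurable (Y t))
    (hmono : ∀ ω, ∀ s t : ℝ, 0 ≤ s → s ≤ t → Y s ω ≤ Y t ω)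
    (q : ℝ → ℝ≥0∞)
    (hq : ∀ u v : ℝ, 0 ≤ u → u ≤ v → P {ω | Y u ω < Y v ω} = q (v - u))
    (lam : ℝ)
    (hlam : Tendsto (fun n : ℕ => (2:ℝ)^n * (q (((2:ℝ)^n)⁻¹)).toReal) atTop (𝓝 lam))
    (hnull : ∀ t : ℝ, 0 ≤ t → P {ω | PtInc (fun u => Y u ω) t} = 0)
    (a b : ℝ) (ha : 0 ≤ a) (hab : a < b) :
    (∀ᵐ ω ∂P, {t | t ∈ Set.Icc a b ∧ PtInc (fun u => Y u ω) t}.Finite) ∧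
    ∫⁻ ω, (({t | t ∈ Set.Icc a b ∧ PtInc (fun u => Y u ω) t}.ncard : ℝ≥0∞)) ∂P
      = ENNReal.ofReal ((b - a) * lam) := by
  classical
  have e_q : ∀ s : ℝ, 0 ≤ s → q s = P {ω | Y 0 ω < Y s ω} := by
    intro s hs
    have := hq 0 s le_rfl hs
    rw [sub_zero] at this
    exact this.symm
  have hqfin : ∀ s : ℝ, 0 ≤ s → q s ≠ ⊤ := by
    intro s hs; rw [e_q s hs]; exact measure_ne_top P _
  have hq1 : ∀ s : ℝ, 0 ≤ s → q s ≤ 1 := by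
    intro s hs; rw [e_q s hs]; exact prob_le_one
  have hqmono : ∀ s t : ℝ, 0 ≤ s → s ≤ t → q s ≤ q t := by
    intro s t hs hst
    rw [e_q s hs, e_q t (by linarith)]
    apply measure_mono
    intro ω hω
    exact lt_of_lt_of_le hω (hmono ω s t hs hst)
  set N : ℕ → Ω → ℝ≥0∞ := fun n ω => ((gS (fun u => Y u ω) a b n).card : ℝ≥0∞) with hN
  have Nrw : ∀ n ω, N n ω = ∑ k ∈ Finset.range (gK a b n + 1),
      (if Y (gpt a b n k) ω < Y (gpt a b n (k+1)) ω then (1:ℝ≥0∞) else 0) := by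
    intro n ω
    rw [hN]
    simp only [gS, Finset.card_filter]
    push_cast
    try rfl
  have hNmeas : ∀ n, Measurable (N n) := by
    intro n
    have : N n = fun ω => ∑ k ∈ Finset.range (gK a b n + 1),
        (if Y (gpt a b n k) ω < Y (gpt a b n (k+1)) ω then (1:ℝ≥0∞) else 0) := by
      funext ω; exact Nrw n ω
    rw [this]
    apply Finset.measurable_sum
    intro k _
    exact Measurable.ite (measurableSet_lt (hmeas _) (hmeas _)) measurable_const
      measurable_const
  have hNmono : ∀ ω, Monotone (fun n => N n ω) := by
    intro ω
    apply monotone_nat_of_le_succ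
    intro n
    exact_mod_cast Nat.cast_le.mpr (gS_card_mono (hmono ω) ha hab.le n)
  set En : ℕ → ℝ≥0∞ := fun n => ∫⁻ ω, N n ω ∂P with hEn_def
  have hrn_nonneg : ∀ n, (0:ℝ) ≤ b - gpt a b n (gK a b n) := by
    intro n; have := gpt_le_b (a := a) (b := b) n (gK a b n); linarith
  have hrn_le : ∀ n, b - gpt a b n (gK a b n) ≤ ((2:ℝ)^n)⁻¹ := by
    intro n
    have := gpt_diff_le (a := a) (b := b) (n := n) (k := gK a b n) le_rfl (by linarith)
    rw [gpt_last] at this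
    linarith
  have hEn : ∀ n, En n = (gK a b n : ℝ≥0∞) * q (((2:ℝ)^n)⁻¹)
      + q (b - gpt a b n (gK a b n)) := by
    intro n
    rw [hEn_def]
    simp only
    have : ∀ ω, N n ω = ∑ k ∈ Finset.range (gK a b n + 1),
        (if Y (gpt a b n k) ω < Y (gpt a b n (k+1)) ω then (1:ℝ≥0∞) else 0) := Nrw n
    rw [lintegral_congr this]
    rw [lintegral_finset_sum _ (fun k _ => Measurable.ite
      (measurableSet_lt (hmeas _) (hmeas _)) measurable_const measurable_const)]
    have hterm : ∀ k, k ≤ gK a b n →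
        ∫⁻ ω, (if Y (gpt a b n k) ω < Y (gpt a b n (k+1)) ω then (1:ℝ≥0∞) else 0) ∂P
          = q (gpt a b n (k+1) - gpt a b n k) := by
      intro k hk
      have hind : (fun ω => if Y (gpt a b n k) ω < Y (gpt a b n (k+1)) ω then (1:ℝ≥0∞) else 0)
          = Set.indicator {ω | Y (gpt a b n k) ω < Y (gpt a b n (k+1)) ω} 1 := by
        funext ω
        rw [Set.indicator_apply]
        rfl
      rw [hind, lintegral_indicator_one (measurableSet_lt (hmeas _) (hmeas _))]
      exact hq _ _ (gpt_nonneg ha hab.le n k) (gpt_mono n (Nat.le_succ k))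
    rw [Finset.sum_range_succ]
    have hsum : ∀ k ∈ Finset.range (gK a b n),
        ∫⁻ ω, (if Y (gpt a b n k) ω < Y (gpt a b n (k+1)) ω then (1:ℝ≥0∞) else 0) ∂P
          = q (((2:ℝ)^n)⁻¹) := by
      intro k hk
      rw [Finset.mem_range] at hk
      rw [hterm k (le_of_lt hk)]
      congr 1
      rw [gpt_eq_of_le (le_of_lt hk) (by linarith), gpt_eq_of_le hk (by linarith)]
      push_cast
      ring
    rw [Finset.sum_congr rfl hsum, Finset.sum_const, Finset.card_range, hterm _ le_rfl]
    rw [gpt_last]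
    rw [nsmul_eq_mul]
  have hEmono : Monotone En := by
    intro n m h
    exact lintegral_mono fun ω => hNmono ω h
  -- real limit computation
  have h2pow : ∀ n : ℕ, (0:ℝ) < 2 ^ n := fun n => by positivity
  have hinv0 : Tendsto (fun n : ℕ => (((2:ℝ)^n)⁻¹)) atTop (𝓝 0) := by
    apply Tendsto.comp tendsto_inv_atTop_zero
    exact tendsto_pow_atTop_atTop_of_one_lt (by norm_num)
  have hKu : Tendsto (fun n : ℕ => (gK a b n : ℝ) * ((2:ℝ)^n)⁻¹) atTop (𝓝 (b - a)) := by
    apply tendsto_of_tendsto_of_tendsto_of_le_of_le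
      (g := fun n : ℕ => (b - a) - ((2:ℝ)^n)⁻¹) (h := fun _ => b - a)
    · simpa using (tendsto_const_nhds (x := b - a)).sub hinv0
    · exact tendsto_const_nhds
    · intro n
      have h1 : (b - a) * 2^n - 1 ≤ (gK a b n : ℝ) := by
        have := Nat.lt_floor_add_one ((b - a) * 2^n)
        unfold gK; linarith
      have : ((b - a) * 2^n - 1) * ((2:ℝ)^n)⁻¹ ≤ (gK a b n : ℝ) * ((2:ℝ)^n)⁻¹ :=
        mul_le_mul_of_nonneg_right h1 (by positivity)
      calc (b - a) - ((2:ℝ)^n)⁻¹ = ((b - a) * 2^n - 1) * ((2:ℝ)^n)⁻¹ := by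
            field_simp
      _ ≤ (gK a b n : ℝ) * ((2:ℝ)^n)⁻¹ := this
    · intro n
      have h1 : (gK a b n : ℝ) ≤ (b - a) * 2^n :=
        Nat.floor_le (mul_nonneg (by linarith) (le_of_lt (h2pow n)))
      have h2 : (gK a b n : ℝ) * ((2:ℝ)^n)⁻¹ ≤ (b - a) * 2^n * ((2:ℝ)^n)⁻¹ :=
        mul_le_mul_of_nonneg_right h1 (by positivity)
      calc (gK a b n : ℝ) * ((2:ℝ)^n)⁻¹ ≤ (b - a) * 2^n * ((2:ℝ)^n)⁻¹ := h2
      _ = b - a := by field_simp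
  have hpn0 : Tendsto (fun n : ℕ => (q (((2:ℝ)^n)⁻¹)).toReal) atTop (𝓝 0) := by
    have : (fun n : ℕ => (q (((2:ℝ)^n)⁻¹)).toReal)
        = fun n : ℕ => ((2:ℝ)^n * (q (((2:ℝ)^n)⁻¹)).toReal) * ((2:ℝ)^n)⁻¹ := by
      funext n; field_simp
    rw [this]
    simpa using hlam.mul hinv0
  have hrn0 : Tendsto (fun n : ℕ => (q (b - gpt a b n (gK a b n))).toReal) atTop (𝓝 0) := by
    apply tendsto_of_tendsto_of_tendsto_of_le_of_le
      (g := fun _ : ℕ => (0:ℝ)) (h := fun n : ℕ => (q (((2:ℝ)^n)⁻¹)).toReal)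
      tendsto_const_nhds hpn0
    · intro n; exact ENNReal.toReal_nonneg
    · intro n
      exact ENNReal.toReal_mono (hqfin _ (by positivity))
        (hqmono _ _ (hrn_nonneg n) (hrn_le n))
  have hreal : Tendsto (fun n : ℕ => (gK a b n : ℝ) * (q (((2:ℝ)^n)⁻¹)).toReal
      + (q (b - gpt a b n (gK a b n))).toReal) atTop (𝓝 ((b - a) * lam)) := by
    have h1 : Tendsto (fun n : ℕ => (gK a b n : ℝ) * (q (((2:ℝ)^n)⁻¹)).toReal)
        atTop (𝓝 ((b - a) * lam)) := by
      have : (fun n : ℕ => (gK a b n : ℝ) * (q (((2:ℝ)^n)⁻¹)).toReal)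
          = fun n : ℕ => ((gK a b n : ℝ) * ((2:ℝ)^n)⁻¹)
              * ((2:ℝ)^n * (q (((2:ℝ)^n)⁻¹)).toReal) := by
        funext n; field_simp
      rw [this]
      exact hKu.mul hlam
    simpa using h1.add hrn0
  have hEn_ofReal : ∀ n, En n = ENNReal.ofReal ((gK a b n : ℝ) * (q (((2:ℝ)^n)⁻¹)).toReal
      + (q (b - gpt a b n (gK a b n))).toReal) := by
    intro n
    rw [hEn n, ENNReal.ofReal_add (by positivity) ENNReal.toReal_nonneg,
      ENNReal.ofReal_mul (by positivity),
      ENNReal.ofReal_toReal (hqfin _ (by positivity)),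
      ENNReal.ofReal_toReal (hqfin _ (hrn_nonneg n)),
      ENNReal.ofReal_natCast]
  have hEtend : Tendsto En atTop (𝓝 (ENNReal.ofReal ((b - a) * lam))) := by
    have : En = fun n => ENNReal.ofReal ((gK a b n : ℝ) * (q (((2:ℝ)^n)⁻¹)).toReal
        + (q (b - gpt a b n (gK a b n))).toReal) := funext hEn_ofReal
    rw [this]
    exact (ENNReal.continuous_ofReal.tendsto _).comp hreal
  have hsup_eq : (⨆ n, En n) = ENNReal.ofReal ((b - a) * lam) :=
    tendsto_nhds_unique (tendsto_atTop_iSup hEmono) hEtend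
  have hlint_sup : ∫⁻ ω, (⨆ n, N n ω) ∂P = ENNReal.ofReal ((b - a) * lam) := by
    rw [lintegral_iSup hNmeas (fun n m h ω => hNmono ω h), hsup_eq]
  have hae_fin : ∀ᵐ ω ∂P, (⨆ n, N n ω) ≠ ⊤ := by
    have := ae_lt_top (Measurable.iSup hNmeas)
      (by rw [hlint_sup]; exact ENNReal.ofReal_ne_top)
    exact this.mono fun ω h => ne_of_lt h
  have hae_G : ∀ᵐ ω ∂P, ∀ n k : ℕ, ¬ PtInc (fun u => Y u ω) (gpt a b n k) := by
    rw [ae_all_iff]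
    intro n
    rw [ae_all_iff]
    intro k
    have h0 := hnull (gpt a b n k) (gpt_nonneg ha hab.le n k)
    rw [ae_iff]
    simpa using h0
  have hae : ∀ᵐ ω ∂P, {t | t ∈ Set.Icc a b ∧ PtInc (fun u => Y u ω) t}.Finite ∧
      (⨆ n, N n ω) = ({t | t ∈ Set.Icc a b ∧ PtInc (fun u => Y u ω) t}.ncard : ℝ≥0∞) := by
    filter_upwards [hae_G, hae_fin] with ω hGω hfinω
    have hB : ∀ n, (gS (fun u => Y u ω) a b n).card ≤ ⌊(⨆ n, N n ω).toReal⌋₊ := by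
      intro n
      apply Nat.le_floor
      have h1 : N n ω ≤ ⨆ m, N m ω := le_iSup (fun m => N m ω) n
      have h2 := ENNReal.toReal_mono hfinω h1
      rw [hN] at h2
      simpa using h2
    exact det_count (hmono ω) ha hab hGω hB
  constructor
  · exact hae.mono fun ω h => h.1
  · rw [← hlint_sup]
    apply lintegral_congr_ae
    exact hae.mono fun ω h => h.2.symm

end countkey

section linear

lemma real_linear (m : ℝ → ℝ)
    (madd : ∀ s t : ℝ, 0 ≤ s → 0 ≤ t → m (s + t) = m s + m t)
    (mmono : ∀ s t : ℝ, 0 ≤ s → s ≤ t → m s ≤ m t) :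
    ∀ t : ℝ, 0 ≤ t → m t = t * m 1 := by
  have hm0 : m 0 = 0 := by have := madd 0 0 le_rfl le_rfl; simp at this; linarith
  have hnat : ∀ (j : ℕ) (s : ℝ), 0 ≤ s → m (j * s) = j * m s := by
    intro j
    induction j with
    | zero => intro s hs; simp [hm0]
    | succ j ih =>
      intro s hs
      have h1 : ((j:ℝ) + 1) * s = (j:ℝ) * s + s := by ring
      push_cast
      rw [h1, madd _ _ (by positivity) hs, ih s hs]
      ring
  have hdyad : ∀ n : ℕ, m (((2:ℝ)^n)⁻¹) = ((2:ℝ)^n)⁻¹ * m 1 := by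
    intro n
    have hp : (0:ℝ) < 2^n := by positivity
    have h1 := hnat (2^n) (((2:ℝ)^n)⁻¹) (by positivity)
    push_cast at h1
    rw [mul_inv_cancel₀ (ne_of_gt hp)] at h1
    rw [h1, ← mul_assoc, inv_mul_cancel₀ (ne_of_gt hp), one_mul]
  intro t ht
  have hp : ∀ n : ℕ, (0:ℝ) < 2^n := fun n => by positivity
  set kn : ℕ → ℕ := fun n => ⌊t * 2^n⌋₊ with hkn
  have hlow : ∀ n, (kn n : ℝ) * ((2:ℝ)^n)⁻¹ ≤ t := by
    intro n
    have h1 : (kn n : ℝ) ≤ t * 2^n := Nat.floor_le (by positivity)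
    calc (kn n : ℝ) * ((2:ℝ)^n)⁻¹ ≤ t * 2^n * ((2:ℝ)^n)⁻¹ :=
      mul_le_mul_of_nonneg_right h1 (by positivity)
    _ = t := by field_simp
  have hhigh : ∀ n, t ≤ ((kn n : ℝ) + 1) * ((2:ℝ)^n)⁻¹ := by
    intro n
    have h1 : t * 2^n < (kn n : ℝ) + 1 := Nat.lt_floor_add_one _
    calc t = t * 2^n * ((2:ℝ)^n)⁻¹ := by field_simp
    _ ≤ ((kn n : ℝ) + 1) * ((2:ℝ)^n)⁻¹ :=
      mul_le_mul_of_nonneg_right (le_of_lt h1) (by positivity)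
  have hku : Tendsto (fun n : ℕ => (kn n : ℝ) * ((2:ℝ)^n)⁻¹) atTop (𝓝 t) := by
    have hinv0 : Tendsto (fun n : ℕ => (((2:ℝ)^n)⁻¹)) atTop (𝓝 0) := by
      apply Tendsto.comp tendsto_inv_atTop_zero
      exact tendsto_pow_atTop_atTop_of_one_lt (by norm_num)
    apply tendsto_of_tendsto_of_tendsto_of_le_of_le
      (g := fun n : ℕ => t - ((2:ℝ)^n)⁻¹) (h := fun _ => t)
    · simpa using (tendsto_const_nhds (x := t)).sub hinv0
    · exact tendsto_const_nhds
    · intro n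
      have := hhigh n
      have h2 : ((kn n : ℝ) + 1) * ((2:ℝ)^n)⁻¹ = (kn n : ℝ) * ((2:ℝ)^n)⁻¹ + ((2:ℝ)^n)⁻¹ := by
        ring
      linarith [hhigh n, h2 ▸ hhigh n]
    · exact hlow
  have hlb : ∀ n, ((kn n : ℝ) * ((2:ℝ)^n)⁻¹) * m 1 ≤ m t := by
    intro n
    have h1 : m ((kn n : ℝ) * ((2:ℝ)^n)⁻¹) ≤ m t :=
      mmono _ _ (by positivity) (hlow n)
    rw [hnat (kn n) _ (by positivity), hdyad n] at h1
    calc ((kn n : ℝ) * ((2:ℝ)^n)⁻¹) * m 1 = (kn n : ℝ) * (((2:ℝ)^n)⁻¹ * m 1) := by ring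
    _ ≤ m t := h1
  have hub : ∀ n, m t ≤ ((kn n : ℝ) * ((2:ℝ)^n)⁻¹) * m 1 + ((2:ℝ)^n)⁻¹ * m 1 := by
    intro n
    have h1 : m t ≤ m (((kn n : ℝ) + 1) * ((2:ℝ)^n)⁻¹) :=
      mmono _ _ ht (hhigh n)
    have h2 : ((kn n : ℝ) + 1) * ((2:ℝ)^n)⁻¹ = ((kn n + 1 : ℕ) : ℝ) * ((2:ℝ)^n)⁻¹ := by
      push_cast; ring
    rw [h2, hnat (kn n + 1) _ (by positivity), hdyad n] at h1
    calc m t ≤ ((kn n : ℕ) + 1 : ℝ) * (((2:ℝ)^n)⁻¹ * m 1) := by push_cast at h1 ⊢; linarith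
    _ = ((kn n : ℝ) * ((2:ℝ)^n)⁻¹) * m 1 + ((2:ℝ)^n)⁻¹ * m 1 := by push_cast; ring
  have hmul : Tendsto (fun n : ℕ => ((kn n : ℝ) * ((2:ℝ)^n)⁻¹) * m 1) atTop (𝓝 (t * m 1)) :=
    hku.mul_const _
  apply le_antisymm
  · have hub' : Tendsto (fun n : ℕ => ((kn n : ℝ) * ((2:ℝ)^n)⁻¹) * m 1 + ((2:ℝ)^n)⁻¹ * m 1)
        atTop (𝓝 (t * m 1)) := by
      have hinv0 : Tendsto (fun n : ℕ => (((2:ℝ)^n)⁻¹)) atTop (𝓝 0) := by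
        apply Tendsto.comp tendsto_inv_atTop_zero
        exact tendsto_pow_atTop_atTop_of_one_lt (by norm_num)
      simpa using hmul.add (hinv0.mul_const (m 1))
    exact ge_of_tendsto' hub' hub
  · exact le_of_tendsto' hmul hlb

end linear
/-- a nondecreasing, increment-stationary process with finite mean increments,
`P(Y(t) = Y(0)) ∈ (0,1)` for small `t > 0`, and conditional increment sizes bounded away
from `0`, has step-function paths a.s. with finitely many jumps per bounded interval; fixed
times are a.s. not jump points; and the expected number of jumps in `[a,b]` equals
`E[Y(b)-Y(a)] / lim_n E[Y(2^{-n})-Y(0) | Y(2^{-n}) > Y(0)]`. -/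
theorem stmt16 {Ω : Type*} [MeasurableSpace Ω] (P : Measure Ω) [IsProbabilityMeasure P]
    (Y : ℝ → Ω → ℝ) (hmeas : ∀ t, Measurable (Y t))
    (hmono : ∀ ω, ∀ s t : ℝ, 0 ≤ s → s ≤ t → Y s ω ≤ Y t ω)
    (hstat : ∀ h : ℝ, 0 ≤ h →
      Measure.map (fun ω => fun t : {t : ℝ // 0 ≤ t} => Y ((t : ℝ) + h) ω - Y h ω) P
        = Measure.map (fun ω => fun t : {t : ℝ // 0 ≤ t} => Y (t : ℝ) ω - Y 0 ω) P)
    (hfin : ∀ a b : ℝ, 0 ≤ a → a < b →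
      ∫⁻ ω, ENNReal.ofReal (Y b ω - Y a ω) ∂P < ⊤)
    (hsmall : ∃ t₀ : ℝ, 0 < t₀ ∧ ∀ t : ℝ, 0 < t → t ≤ t₀ →
      0 < P {ω | Y t ω = Y 0 ω} ∧ P {ω | Y t ω = Y 0 ω} < 1)
    (c : ℝ → ℝ)
    (hc : ∀ t, c t = (∫ ω in {ω | Y 0 ω < Y t ω}, (Y t ω - Y 0 ω) ∂P)
        / (P {ω | Y 0 ω < Y t ω}).toReal)
    (hliminf : 0 < liminf c (nhdsWithin 0 (Set.Ioi 0))) :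
    (∀ᵐ ω ∂P, ∀ a b : ℝ, 0 ≤ a → a < b →
      ∃ s : Finset ℝ, ∀ t ∈ Set.Icc a b, t ∉ s →
        ∃ ε : ℝ, 0 < ε ∧ ∀ u ∈ Set.Icc a b, |u - t| < ε → Y u ω = Y t ω) ∧
    (∀ t : ℝ, 0 ≤ t → P {ω | PtInc (fun u => Y u ω) t} = 0) ∧
    (∀ a b : ℝ, 0 ≤ a → a < b →
      ∃ L : ℝ, Tendsto (fun n : ℕ => c ((2 : ℝ) ^ (-(n : ℝ)))) atTop (nhds L) ∧
        ∫⁻ ω, (({t | t ∈ Set.Icc a b ∧ PtInc (fun u => Y u ω) t}.ncard : ℝ≥0∞)) ∂P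
          = ENNReal.ofReal ((∫ ω, (Y b ω - Y a ω) ∂P) / L)) := by
  classical
  obtain ⟨t₀, ht₀, hsm⟩ := hsmall
  set q : ℝ → ℝ≥0∞ := fun s => P {ω | Y 0 ω < Y s ω} with hq_def
  have hqstat : ∀ u v : ℝ, 0 ≤ u → u ≤ v → P {ω | Y u ω < Y v ω} = q (v - u) := by
    intro u v hu huv
    have h := stat_set P hmeas hstat hu (by linarith : (0:ℝ) ≤ v - u)
    rw [show v - u + u = v by ring] at h
    rw [h]
  have hqfin : ∀ s, q s ≠ ⊤ := fun s => measure_ne_top P _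
  have hqmono_e : ∀ s t : ℝ, 0 ≤ s → s ≤ t → q s ≤ q t := by
    intro s t hs hst
    apply measure_mono
    intro ω hω
    exact lt_of_lt_of_le hω (hmono ω s t hs hst)
  set M : ℝ → ℝ≥0∞ := fun s => ∫⁻ ω, ENNReal.ofReal (Y s ω - Y 0 ω) ∂P with hM_def
  have hMstat : ∀ u v : ℝ, 0 ≤ u → u ≤ v →
      ∫⁻ ω, ENNReal.ofReal (Y v ω - Y u ω) ∂P = M (v - u) := by
    intro u v hu huv
    have h := stat_lint P hmeas hstat hu (by linarith : (0:ℝ) ≤ v - u)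
    rw [show v - u + u = v by ring] at h
    rw [h]
  have hMfin : ∀ t : ℝ, 0 ≤ t → M t ≠ ⊤ := by
    intro t ht0
    rcases eq_or_lt_of_le ht0 with h | h
    · rw [hM_def]
      simp only [← h, sub_self, ENNReal.ofReal_zero, lintegral_zero]
      exact ENNReal.zero_ne_top
    · exact ne_of_lt (hfin 0 t le_rfl h)
  have hMadd : ∀ s t : ℝ, 0 ≤ s → 0 ≤ t → M (s + t) = M s + M t := by
    intro s t hs ht0
    have e : ∀ ω, ENNReal.ofReal (Y (s+t) ω - Y 0 ω)
        = ENNReal.ofReal (Y (s+t) ω - Y t ω) + ENNReal.ofReal (Y t ω - Y 0 ω) := by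
      intro ω
      rw [← ENNReal.ofReal_add (sub_nonneg.mpr (hmono ω t (s+t) ht0 (by linarith)))
        (sub_nonneg.mpr (hmono ω 0 t le_rfl ht0))]
      ring_nf
    rw [hM_def]
    simp only
    rw [lintegral_congr e, lintegral_add_left (f := fun ω => ENNReal.ofReal (Y (s+t) ω - Y t ω)) (((hmeas _).sub (hmeas _)).ennreal_ofReal)]
    congr 1
    have h := hMstat t (s+t) ht0 (by linarith)
    rw [show s + t - t = s by ring] at h
    exact h
  set m : ℝ → ℝ := fun t => (M t).toReal with hm_def
  have hmadd : ∀ s t : ℝ, 0 ≤ s → 0 ≤ t → m (s+t) = m s + m t := by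
    intro s t hs ht0
    rw [hm_def]
    simp only
    rw [hMadd s t hs ht0, ENNReal.toReal_add (hMfin s hs) (hMfin t ht0)]
  have hmmono : ∀ s t : ℝ, 0 ≤ s → s ≤ t → m s ≤ m t := by
    intro s t hs hst
    apply ENNReal.toReal_mono (hMfin t (by linarith))
    apply lintegral_mono
    intro ω
    exact ENNReal.ofReal_le_ofReal (by linarith [hmono ω s t hs hst])
  have hmlin := real_linear m hmadd hmmono
  -- c value identity
  have hcval : ∀ s : ℝ, 0 < s → c s = m s / (q s).toReal := by
    intro s hs
    rw [hc s]
    congr 1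
    have hSm : MeasurableSet {ω | Y 0 ω < Y s ω} := measurableSet_lt (hmeas 0) (hmeas s)
    have hind : Set.indicator {ω | Y 0 ω < Y s ω} (fun ω => Y s ω - Y 0 ω)
        = fun ω => Y s ω - Y 0 ω := by
      apply Set.indicator_eq_self.mpr
      intro ω hω
      have h1 : Y 0 ω ≤ Y s ω := hmono ω 0 s le_rfl (le_of_lt hs)
      have h2 : Y s ω - Y 0 ω ≠ 0 := hω
      exact lt_of_le_of_ne h1 (Ne.symm (sub_ne_zero.mp h2))
    have hnn : 0 ≤ᵐ[P] fun ω => Y s ω - Y 0 ω :=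
      Eventually.of_forall fun ω => sub_nonneg.mpr (hmono ω 0 s le_rfl hs.le)
    calc ∫ ω in {ω | Y 0 ω < Y s ω}, (Y s ω - Y 0 ω) ∂P
        = ∫ ω, Set.indicator {ω | Y 0 ω < Y s ω} (fun ω => Y s ω - Y 0 ω) ω ∂P :=
          (integral_indicator hSm).symm
    _ = ∫ ω, (Y s ω - Y 0 ω) ∂P := by rw [hind]
    _ = m s := by
        rw [integral_eq_lintegral_of_nonneg_ae hnn
          (((hmeas s).sub (hmeas 0)).aestronglyMeasurable)]
  -- liminf extraction
  have hcnonneg : ∀ t, 0 ≤ c t := by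
    intro t
    rw [hc t]
    apply div_nonneg _ ENNReal.toReal_nonneg
    apply setIntegral_nonneg (measurableSet_lt (hmeas 0) (hmeas t))
    intro ω hω
    exact sub_nonneg.mpr (le_of_lt hω)
  have hδpos : 0 < liminf c (nhdsWithin 0 (Set.Ioi 0)) / 2 := by linarith
  set δ := liminf c (nhdsWithin 0 (Set.Ioi 0)) / 2 with hδ_def
  have hev : ∀ᶠ t in nhdsWithin 0 (Set.Ioi 0), δ < c t := by
    exact eventually_lt_of_lt_liminf (by rw [hδ_def]; linarith)
      ⟨0, eventually_map.mpr (Eventually.of_forall hcnonneg)⟩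
  rw [eventually_nhdsWithin_iff] at hev
  obtain ⟨η, hηpos, hη⟩ := Metric.eventually_nhds_iff.mp hev
  -- q positivity
  have hqcompl : ∀ s : ℝ, 0 < s → q s = 1 - P {ω | Y s ω = Y 0 ω} := by
    intro s hs
    have hset : {ω | Y 0 ω < Y s ω} = {ω | Y s ω = Y 0 ω}ᶜ := by
      ext ω
      simp only [Set.mem_setOf_eq, Set.mem_compl_iff]
      constructor
      · intro h heq; rw [heq] at h; exact absurd h (lt_irrefl _)
      · intro h
        exact lt_of_le_of_ne (hmono ω 0 s le_rfl hs.le) (fun heq => h heq.symm)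
    rw [hq_def]
    simp only
    rw [hset, prob_compl_eq_one_sub (measurableSet_eq_fun (hmeas s) (hmeas 0))]
  have hqpos : ∀ s : ℝ, 0 < s → s ≤ t₀ → 0 < (q s).toReal := by
    intro s hs hst
    have h2 := (hsm s hs hst).2
    rw [hqcompl s hs]
    apply ENNReal.toReal_pos (ne_of_gt (tsub_pos_of_lt h2))
    exact ne_of_lt (lt_of_le_of_lt tsub_le_self ENNReal.one_lt_top)
  -- dyadic scale
  set u : ℕ → ℝ := fun n => ((2:ℝ)^n)⁻¹ with hu_def
  have hupos : ∀ n, 0 < u n := fun n => by rw [hu_def]; positivity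
  have huhalf : ∀ n, u (n+1) + u (n+1) = u n := by
    intro n; rw [hu_def]; simp only; rw [pow_succ]; field_simp; ring
  have hu_anti : ∀ n n' : ℕ, n ≤ n' → u n' ≤ u n := by
    intro n n' h
    rw [hu_def]
    simp only
    apply inv_anti₀ (by positivity)
    exact pow_le_pow_right₀ (by norm_num) h
  have hinv0 : Tendsto u atTop (𝓝 0) := by
    rw [hu_def]
    apply Tendsto.comp tendsto_inv_atTop_zero
    exact tendsto_pow_atTop_atTop_of_one_lt (by norm_num)
  -- Lambda
  set Λ : ℕ → ℝ := fun n => 2^n * (q (u n)).toReal with hΛ_def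
  have hΛmono : Monotone Λ := by
    apply monotone_nat_of_le_succ
    intro n
    have hsub : q (u n) ≤ q (u (n+1)) + q (u (n+1)) := by
      have hsubset : {ω | Y 0 ω < Y (u n) ω} ⊆
          {ω | Y 0 ω < Y (u (n+1)) ω} ∪ {ω | Y (u (n+1)) ω < Y (u n) ω} := by
        intro ω hω
        by_cases hcs : Y 0 ω < Y (u (n+1)) ω
        · exact Or.inl hcs
        · right
          have h1 : Y 0 ω ≤ Y (u (n+1)) ω := hmono ω 0 _ le_rfl (hupos _).le
          have h2 : Y (u (n+1)) ω = Y 0 ω := le_antisymm (le_of_not_gt hcs) h1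
          show Y (u (n+1)) ω < Y (u n) ω
          rw [h2]; exact hω
      calc q (u n) = P {ω | Y 0 ω < Y (u n) ω} := rfl
      _ ≤ P ({ω | Y 0 ω < Y (u (n+1)) ω} ∪ {ω | Y (u (n+1)) ω < Y (u n) ω}) :=
          measure_mono hsubset
      _ ≤ P {ω | Y 0 ω < Y (u (n+1)) ω} + P {ω | Y (u (n+1)) ω < Y (u n) ω} :=
          measure_union_le _ _
      _ = q (u (n+1)) + q (u (n+1)) := by
          congr 1
          have := hqstat (u (n+1)) (u n) (hupos _).le
            (by linarith [huhalf n, hupos (n+1)])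
          rw [this]
          congr 1
          linarith [huhalf n]
    have hle : (q (u n)).toReal ≤ 2 * (q (u (n+1))).toReal := by
      have h1 := ENNReal.toReal_mono
        (ENNReal.add_ne_top.mpr ⟨hqfin _, hqfin _⟩) hsub
      rw [ENNReal.toReal_add (hqfin _) (hqfin _)] at h1
      linarith
    rw [hΛ_def]
    simp only
    have hp : (0:ℝ) < 2^n := by positivity
    calc 2^n * (q (u n)).toReal ≤ 2^n * (2 * (q (u (n+1))).toReal) :=
        mul_le_mul_of_nonneg_left hle hp.le
    _ = 2^(n+1) * (q (u (n+1))).toReal := by ring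
  -- n₀
  obtain ⟨n₀, hn₀⟩ := exists_pow_lt_of_lt_one (lt_min hηpos ht₀) (by norm_num : (1:ℝ)/2 < 1)
  have hhalfpow : ∀ n : ℕ, ((1:ℝ)/2)^n = u n := by
    intro n; rw [hu_def]; simp only; rw [div_pow, one_pow, one_div]
  rw [hhalfpow] at hn₀
  have hu_small : ∀ n, n₀ ≤ n → u n < min η t₀ := fun n hn =>
    lt_of_le_of_lt (hu_anti n₀ n hn) hn₀
  have hδc : ∀ n, n₀ ≤ n → δ < c (u n) := by
    intro n hn
    apply hη
    · rw [Real.dist_eq, sub_zero, abs_of_pos (hupos n)]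
      exact lt_of_lt_of_le (hu_small n hn) (min_le_left _ _)
    · exact hupos n
  have hqpos' : ∀ n, n₀ ≤ n → 0 < (q (u n)).toReal := fun n hn =>
    hqpos (u n) (hupos n) (le_of_lt (lt_of_lt_of_le (hu_small n hn) (min_le_right _ _)))
  have hmu : ∀ n : ℕ, m (u n) = u n * m 1 := fun n => hmlin (u n) (hupos n).le
  have hΛbound : ∀ n, Λ n ≤ m 1 / δ := by
    have hbound' : ∀ n, n₀ ≤ n → Λ n ≤ m 1 / δ := by
      intro n hn
      have h1 := hδc n hn
      rw [hcval (u n) (hupos n), hmu n] at h1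
      have h2 := hqpos' n hn
      have h3 : δ * (q (u n)).toReal < u n * m 1 := by
        rw [lt_div_iff₀ h2] at h1
        linarith
      rw [hΛ_def]
      simp only
      have hp : (0:ℝ) < 2^n := by positivity
      have hup : u n * 2^n = 1 := by rw [hu_def]; field_simp
      rw [le_div_iff₀ hδpos]
      have h4 : (2^n : ℝ) * (δ * (q (u n)).toReal) ≤ 2^n * (u n * m 1) :=
        mul_le_mul_of_nonneg_left h3.le hp.le
      calc 2^n * (q (u n)).toReal * δ = 2^n * (δ * (q (u n)).toReal) := by ring
      _ ≤ 2^n * (u n * m 1) := h4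
      _ = (u n * 2^n) * m 1 := by ring
      _ = m 1 := by rw [hup, one_mul]
    intro n
    calc Λ n ≤ Λ (max n n₀) := hΛmono (le_max_left _ _)
    _ ≤ m 1 / δ := hbound' _ (le_max_right _ _)
  have hbdd : BddAbove (Set.range Λ) := ⟨m 1 / δ, by rintro x ⟨n, rfl⟩; exact hΛbound n⟩
  set lam := ⨆ n, Λ n with hlam_def
  have hΛtendsto : Tendsto Λ atTop (𝓝 lam) := tendsto_atTop_ciSup hΛmono hbdd
  have hΛpos : 0 < Λ n₀ := by
    rw [hΛ_def]
    simp only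
    exact mul_pos (by positivity) (hqpos' n₀ le_rfl)
  have hlampos : 0 < lam := lt_of_lt_of_le hΛpos (le_ciSup hbdd n₀)
  have hm1pos : 0 < m 1 := by
    have h1 := hδc n₀ le_rfl
    rw [hcval (u n₀) (hupos n₀), hmu n₀] at h1
    have h2 := hqpos' n₀ le_rfl
    have h3 : 0 < u n₀ * m 1 := lt_of_le_of_lt (by positivity)
      (lt_of_le_of_lt (by positivity : (0:ℝ) ≤ δ * (q (u n₀)).toReal)
        (by rw [lt_div_iff₀ h2] at h1; linarith))
    nlinarith [hupos n₀]
  -- q (u n) → 0 in ℝ≥0∞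
  have hpn0 : Tendsto (fun n => (q (u n)).toReal) atTop (𝓝 0) := by
    have heq : (fun n => (q (u n)).toReal) = fun n => Λ n * u n := by
      funext n
      rw [hΛ_def, hu_def]
      simp only
      field_simp
    rw [heq]
    simpa using hΛtendsto.mul hinv0
  have hqu0 : Tendsto (fun n => q (u n)) atTop (𝓝 0) := by
    have heq : (fun n => q (u n)) = fun n => ENNReal.ofReal ((q (u n)).toReal) := by
      funext n; rw [ENNReal.ofReal_toReal (hqfin _)]
    rw [heq]
    have := (ENNReal.continuous_ofReal.tendsto (0:ℝ)).comp hpn0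
    simpa [Function.comp_def] using this
  -- conclusion 2
  have hnull : ∀ t : ℝ, 0 ≤ t → P {ω | PtInc (fun v => Y v ω) t} = 0 := by
    intro t ht
    have hle : ∀ n : ℕ, P {ω | PtInc (fun v => Y v ω) t} ≤ q (u n) := by
      intro n
      have hε := hupos (n+1)
      have hsub : {ω | PtInc (fun v => Y v ω) t}
          ⊆ {ω | Y (max (t - u (n+1)) 0) ω < Y (t + u (n+1)) ω} :=
        fun ω h => h (u (n+1)) hε
      have hmaxle : max (t - u (n+1)) 0 ≤ t + u (n+1) :=
        max_le (by linarith) (by linarith)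
      have hstep := hqstat (max (t - u (n+1)) 0) (t + u (n+1)) (le_max_right _ _) hmaxle
      calc P {ω | PtInc (fun v => Y v ω) t}
          ≤ P {ω | Y (max (t - u (n+1)) 0) ω < Y (t + u (n+1)) ω} := measure_mono hsub
      _ = q (t + u (n+1) - max (t - u (n+1)) 0) := hstep
      _ ≤ q (u n) := by
          apply hqmono_e _ _ (by linarith)
          have h1 : t - u (n+1) ≤ max (t - u (n+1)) 0 := le_max_left _ _
          linarith [huhalf n]
    have h0 := ge_of_tendsto' hqu0 hle
    exact le_antisymm h0 zero_le
  -- L and the c limit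
  have hrpow : ∀ n : ℕ, (2:ℝ) ^ (-(n:ℝ)) = u n := by
    intro n
    show (2:ℝ) ^ (-(n:ℝ)) = ((2:ℝ)^n)⁻¹
    rw [Real.rpow_neg (by norm_num : (0:ℝ) ≤ 2), Real.rpow_natCast]
  have hclim : Tendsto (fun n : ℕ => c ((2:ℝ)^(-(n:ℝ)))) atTop (𝓝 (m 1 / lam)) := by
    have hbase : Tendsto (fun n => m 1 / Λ n) atTop (𝓝 (m 1 / lam)) :=
      tendsto_const_nhds.div hΛtendsto (ne_of_gt hlampos)
    apply hbase.congr'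
    rw [eventuallyEq_iff_exists_mem]
    refine ⟨{n | n₀ ≤ n}, mem_atTop n₀, ?_⟩
    intro n hn
    show m 1 / Λ n = c ((2:ℝ) ^ (-(n:ℝ)))
    rw [hrpow n, hcval (u n) (hupos n), hmu n]
    have h2 := hqpos' n hn
    rw [hΛ_def, hu_def] at *
    simp only at *
    rw [eq_comm]
    field_simp
    try ring
  -- count_key applications
  have hkey : ∀ a b : ℝ, 0 ≤ a → a < b →
      (∀ᵐ ω ∂P, {t | t ∈ Set.Icc a b ∧ PtInc (fun v => Y v ω) t}.Finite) ∧
      ∫⁻ ω, (({t | t ∈ Set.Icc a b ∧ PtInc (fun v => Y v ω) t}.ncard : ℝ≥0∞)) ∂P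
        = ENNReal.ofReal ((b - a) * lam) := by
    intro a b ha hab
    exact count_key P Y hmeas hmono q hqstat lam hΛtendsto hnull a b ha hab
  refine ⟨?_, hnull, ?_⟩
  · -- conclusion 1
    have hae_all : ∀ᵐ ω ∂P, ∀ mb : ℕ,
        {t | t ∈ Set.Icc 0 ((mb:ℝ)+1) ∧ PtInc (fun v => Y v ω) t}.Finite :=
      ae_all_iff.mpr fun mb => (hkey 0 ((mb:ℝ)+1) le_rfl (by positivity)).1
    filter_upwards [hae_all] with ω hω
    intro a b ha hab
    have hble : b ≤ (⌈b⌉₊ : ℝ) + 1 := le_trans (Nat.le_ceil b) (by linarith)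
    have hsubJ : {t | t ∈ Set.Icc a b ∧ PtInc (fun v => Y v ω) t}
        ⊆ {t | t ∈ Set.Icc 0 ((⌈b⌉₊:ℝ)+1) ∧ PtInc (fun v => Y v ω) t} :=
      fun t ht => ⟨⟨le_trans ha ht.1.1, le_trans ht.1.2 hble⟩, ht.2⟩
    have hfinJ := (hω ⌈b⌉₊).subset hsubJ
    refine ⟨hfinJ.toFinset, ?_⟩
    intro t htI hts
    have hnotJ : ¬ PtInc (fun v => Y v ω) t :=
      fun hpt => hts (hfinJ.mem_toFinset.mpr ⟨htI, hpt⟩)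
    rw [PtInc] at hnotJ
    push_neg at hnotJ
    obtain ⟨ε, hε, hle⟩ := hnotJ
    refine ⟨ε, hε, ?_⟩
    have h0t : 0 ≤ t := le_trans ha htI.1
    have heq : Y (max (t-ε) 0) ω = Y (t+ε) ω :=
      le_antisymm (hmono ω _ _ (le_max_right _ _) (max_le (by linarith) (by linarith))) hle
    intro v hvI hvd
    rw [abs_sub_lt_iff] at hvd
    have h0v : 0 ≤ v := le_trans ha hvI.1
    have h1 : Y (max (t-ε) 0) ω ≤ Y v ω :=
      hmono ω _ _ (le_max_right _ _) (max_le (by linarith) h0v)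
    have h2 : Y v ω ≤ Y (t+ε) ω := hmono ω _ _ h0v (by linarith)
    have h3 : Y (max (t-ε) 0) ω ≤ Y t ω :=
      hmono ω _ _ (le_max_right _ _) (max_le (by linarith) h0t)
    have h4 : Y t ω ≤ Y (t+ε) ω := hmono ω _ _ h0t (by linarith)
    linarith
  · -- conclusion 3
    intro a b ha hab
    refine ⟨m 1 / lam, hclim, ?_⟩
    rw [(hkey a b ha hab).2]
    congr 1
    have hint : ∫ ω, (Y b ω - Y a ω) ∂P = (b-a) * m 1 := by
      rw [integral_eq_lintegral_of_nonneg_ae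
        (Eventually.of_forall fun ω => sub_nonneg.mpr (hmono ω a b ha hab.le))
        (((hmeas b).sub (hmeas a)).aestronglyMeasurable)]
      rw [hMstat a b ha hab.le]
      exact hmlin (b-a) (by linarith)
    rw [hint]
    rw [eq_comm]
    field_simp
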